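/- Let k be a commutative ring and A = ⊕_{p≥0} A_p a graded k-algebra with A_0 a k-algebra, generated as an A_0-algebra by finitely many homogeneous elements. Then there exists m > 0 such that the graded A_0-subalgebra ⊕_{p≥0} A_{pm} is generated as an A_0-algebra by A_m. -/

import Mathlib

open Finset in
/-- If a graded `k`-algebra `A = ⊕ A_p` is generated over `A_0` by finitely many homogeneous
elements, then for some `m > 0` the subalgebra `⊕_p A_{pm}` is generated over `A_0` by `A_m`. -/
theorem exists_veronese_generated_in_degree_one {k A : Type*} [CommRing k] [CommRing A]
    [Algebra k A] (𝒜 : ℕ → Submodule k A) [GradedAlgebra 𝒜]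
    (s : Finset A) (hs : ∀ x ∈ s, ∃ d : ℕ, x ∈ 𝒜 d)
    (hgen : Algebra.adjoin k ((𝒜 0 : Set A) ∪ (s : Set A)) = ⊤) :
    ∃ m : ℕ, 0 < m ∧ ∀ p : ℕ,
      (𝒜 (p * m) : Set A) ⊆ Algebra.adjoin k ((𝒜 0 : Set A) ∪ (𝒜 m : Set A)) := by
  classical
  obtain ⟨d, hd⟩ : ∃ d : A → ℕ, ∀ x ∈ s, x ∈ 𝒜 (d x) :=
    ⟨fun x => if h : x ∈ s then (hs x h).choose else 0,
     fun x hx => by simp only [dif_pos hx]; exact (hs x hx).choose_spec⟩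
  set ℓ : ℕ := ∏ x ∈ s, max (d x) 1 with hℓdef
  have hℓ1 : 1 ≤ ℓ := Finset.one_le_prod' (fun x _ => le_max_right _ _)
  have hdvd : ∀ x ∈ s, 0 < d x → d x ∣ ℓ := by
    intro x hx h0
    simpa only [max_eq_left (show 1 ≤ d x from h0)] using Finset.dvd_prod_of_mem (fun y => max (d y) 1) hx
  set n : ℕ := s.card with hndef
  refine ⟨(n + 1) * ℓ, Nat.mul_pos (Nat.succ_pos n) hℓ1, ?_⟩
  set m : ℕ := (n + 1) * ℓ with hmdef
  set T : Subalgebra k A := Algebra.adjoin k ((𝒜 0 : Set A) ∪ (𝒜 m : Set A)) with hTdef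
  have h0T : ∀ {x : A}, x ∈ 𝒜 0 → x ∈ T := fun hx =>
    Algebra.subset_adjoin (Set.mem_union_left _ hx)
  have hmT : ∀ {x : A}, x ∈ 𝒜 m → x ∈ T := fun hx =>
    Algebra.subset_adjoin (Set.mem_union_right _ hx)
  -- monomials are homogeneous
  have hprodmem : ∀ (t : Finset A), t ⊆ s → ∀ c : A → ℕ,
      (∏ x ∈ t, x ^ c x) ∈ 𝒜 (∑ x ∈ t, c x * d x) := by
    intro t
    induction t using Finset.induction_on with
    | empty => intro _ c; simpa using SetLike.one_mem_graded 𝒜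
    | @insert a t hnot ih =>
      intro hsub c
      rw [Finset.prod_insert hnot, Finset.sum_insert hnot]
      refine SetLike.mul_mem_graded ?_ (ih (fun y hy => hsub (Finset.mem_insert_of_mem hy)) c)
      simpa [smul_eq_mul] using
        SetLike.pow_mem_graded (A := 𝒜) (c a) (hd a (hsub (Finset.mem_insert_self _ _)))
  -- products of lists of degree-ℓ elements
  have hlistmem : ∀ L : List A, (∀ a ∈ L, a ∈ 𝒜 ℓ) → L.prod ∈ 𝒜 (L.length * ℓ) := by
    intro L
    induction L with
    | nil => intro _; simpa using SetLike.one_mem_graded 𝒜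
    | cons a L ih =>
      intro hL
      have h1 : (a :: L).length * ℓ = ℓ + L.length * ℓ := by
        simp [List.length_cons]; ring
      rw [List.prod_cons, h1]
      exact SetLike.mul_mem_graded (hL a (List.mem_cons_self))
        (ih fun b hb => hL b (List.mem_cons_of_mem a hb))
  -- grouping lists of degree-ℓ elements into degree-m elements
  have GROUP : ∀ (r : ℕ) (L : List A), L.length = r * (n + 1) → (∀ a ∈ L, a ∈ 𝒜 ℓ) →
      L.prod ∈ T := by
    intro r
    induction r with
    | zero =>
      intro L hlen _
      have : L = [] := List.length_eq_zero_iff.mp (by simpa using hlen)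
      rw [this, List.prod_nil]
      exact one_mem T
    | succ r ih =>
      intro L hlen hL
      rw [← List.prod_take_mul_prod_drop L (n + 1)]
      have htake : (L.take (n + 1)).length = n + 1 := by
        rw [List.length_take, hlen]
        have h1 : n + 1 ≤ (r + 1) * (n + 1) := Nat.le_mul_of_pos_left _ (Nat.succ_pos r)
        omega
      have hdrop : (L.drop (n + 1)).length = r * (n + 1) := by
        rw [List.length_drop, hlen]
        have h1 : (r + 1) * (n + 1) = r * (n + 1) + (n + 1) := by ring
        omega
      refine mul_mem (hmT ?_) (ih _ hdrop (fun a ha => hL a (List.mem_of_mem_drop ha)))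
      have := hlistmem (L.take (n + 1)) (fun a ha => hL a (List.mem_of_mem_take ha))
      rwa [htake] at this
  -- strip off t chunks of degree ℓ
  have STRIP : ∀ (t : ℕ) (c : A → ℕ), (t + n) * ℓ ≤ ∑ x ∈ s, c x * d x →
      ∃ (L : List A) (c' : A → ℕ), L.length = t ∧ (∀ a ∈ L, a ∈ 𝒜 ℓ) ∧
        (∑ x ∈ s, c' x * d x) + t * ℓ = ∑ x ∈ s, c x * d x ∧
        (∏ x ∈ s, x ^ c x) = L.prod * ∏ x ∈ s, x ^ c' x := by
    intro t
    induction t with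
    | zero => intro c _; exact ⟨[], c, rfl, by simp, by simp, by simp⟩
    | succ t ih =>
      intro c hc
      have hex : ∃ x ∈ s, ℓ ≤ c x * d x := by
        by_contra hno
        push_neg at hno
        have hb : ∑ x ∈ s, c x * d x ≤ n * (ℓ - 1) := by
          calc ∑ x ∈ s, c x * d x ≤ ∑ _x ∈ s, (ℓ - 1) :=
                Finset.sum_le_sum (fun x hx => by have := hno x hx; omega)
            _ = n * (ℓ - 1) := by rw [Finset.sum_const, smul_eq_mul]
        have h1 : (n + 1) * ℓ ≤ (t + 1 + n) * ℓ := Nat.mul_le_mul_right _ (by omega)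
        have h2 : (n + 1) * ℓ = n * ℓ + ℓ := by ring
        have h3 : n * (ℓ - 1) ≤ n * ℓ := Nat.mul_le_mul_left _ (by omega)
        omega
      obtain ⟨x0, hx0s, hx0⟩ := hex
      have hd0 : 0 < d x0 := by
        rcases Nat.eq_zero_or_pos (d x0) with h | h
        · rw [h, mul_zero] at hx0; omega
        · exact h
      have he : ℓ / d x0 * d x0 = ℓ := Nat.div_mul_cancel (hdvd x0 hx0s hd0)
      set e : ℕ := ℓ / d x0 with hedef
      have hec : e ≤ c x0 := by
        have h1 : e * d x0 ≤ c x0 * d x0 := by rw [he]; exact hx0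
        exact Nat.le_of_mul_le_mul_right h1 hd0
      set c'' : A → ℕ := Function.update c x0 (c x0 - e) with hc''def
      have hsum'' : (∑ x ∈ s, c'' x * d x) + ℓ = ∑ x ∈ s, c x * d x := by
        rw [← Finset.add_sum_erase s (fun x => c'' x * d x) hx0s,
            ← Finset.add_sum_erase s (fun x => c x * d x) hx0s]
        have hrest : ∑ x ∈ s.erase x0, c'' x * d x = ∑ x ∈ s.erase x0, c x * d x :=
          Finset.sum_congr rfl fun x hx => by
            rw [hc''def, Function.update_of_ne (Finset.ne_of_mem_erase hx)]
        have hx0' : c'' x0 = c x0 - e := by rw [hc''def, Function.update_self]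
        have hsub := Nat.sub_mul (c x0) e (d x0)
        rw [hrest, hx0']
        omega
      have hprod'' : (∏ x ∈ s, x ^ c x) = x0 ^ e * ∏ x ∈ s, x ^ c'' x := by
        rw [← Finset.mul_prod_erase s (fun x => x ^ c x) hx0s,
            ← Finset.mul_prod_erase s (fun x => x ^ c'' x) hx0s]
        have hrest : ∏ x ∈ s.erase x0, x ^ c'' x = ∏ x ∈ s.erase x0, x ^ c x :=
          Finset.prod_congr rfl fun x hx => by
            rw [hc''def, Function.update_of_ne (Finset.ne_of_mem_erase hx)]
        have hx0' : c'' x0 = c x0 - e := by rw [hc''def, Function.update_self]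
        rw [hrest, hx0', ← mul_assoc, ← pow_add, Nat.add_sub_cancel' hec]
      have harg : (t + n) * ℓ ≤ ∑ x ∈ s, c'' x * d x := by
        have h2 : (t + 1 + n) * ℓ = (t + n) * ℓ + ℓ := by ring
        omega
      obtain ⟨L, c', hlen, hL, hsum, hprodL⟩ := ih c'' harg
      refine ⟨x0 ^ e :: L, c', by simp [hlen], ?_, ?_, ?_⟩
      · intro a ha
        rcases List.mem_cons.mp ha with h | h
        · subst h
          have := SetLike.pow_mem_graded (A := 𝒜) e (hd x0 hx0s)
          rwa [smul_eq_mul, he] at this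
        · exact hL a h
      · have h2 : (t + 1) * ℓ = t * ℓ + ℓ := by ring
        omega
      · rw [hprod'', hprodL, List.prod_cons]; ring
  -- monomials of degree p*m lie in T
  have MAIN : ∀ (p : ℕ) (c : A → ℕ), (∑ x ∈ s, c x * d x) = p * m →
      (∏ x ∈ s, x ^ c x) ∈ T := by
    intro p c hc
    cases p with
    | zero =>
      rw [zero_mul] at hc
      refine Subalgebra.prod_mem T fun x hx => ?_
      rcases Nat.mul_eq_zero.mp ((Finset.sum_eq_zero_iff.mp hc) x hx) with h | h
      · rw [h, pow_zero]; exact one_mem T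
      · exact pow_mem (h0T (h ▸ hd x hx)) _
    | succ p =>
      have hle : (p * (n + 1) + 1 + n) * ℓ ≤ ∑ x ∈ s, c x * d x := by
        rw [hc]
        have : (p + 1) * m = (p * (n + 1) + 1 + n) * ℓ := by rw [hmdef]; ring
        omega
      obtain ⟨L, c', hlen, hL, hsum, hprodL⟩ := STRIP (p * (n + 1) + 1) c hle
      have hsum' : (∑ x ∈ s, c' x * d x) = n * ℓ := by
        have h1 : (p + 1) * m = (p * (n + 1) + 1) * ℓ + n * ℓ := by rw [hmdef]; ring
        omega
      have hz : (∏ x ∈ s, x ^ c' x) ∈ 𝒜 (n * ℓ) := by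
        have := hprodmem s (le_refl _) c'
        rwa [hsum'] at this
      cases L with
      | nil => simp at hlen
      | cons a L' =>
        have haℓ : a ∈ 𝒜 ℓ := hL a (List.mem_cons_self)
        have hL' : L'.length = p * (n + 1) := by simpa using hlen
        have hgrp : L'.prod ∈ T := GROUP p L' hL' (fun b hb => hL b (List.mem_cons_of_mem a hb))
        have haz : a * ∏ x ∈ s, x ^ c' x ∈ T := by
          refine hmT ?_
          have := SetLike.mul_mem_graded haℓ hz
          have hm : ℓ + n * ℓ = m := by rw [hmdef]; ring
          rwa [hm] at this
        rw [hprodL, List.prod_cons]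
        have hre : a * L'.prod * ∏ x ∈ s, x ^ c' x = L'.prod * (a * ∏ x ∈ s, x ^ c' x) := by
          ring
        rw [hre]
        exact mul_mem hgrp haz
  -- decomposition of elements of the generated submonoid
  have DECOMP : ∀ w ∈ Submonoid.closure ((𝒜 0 : Set A) ∪ (s : Set A)),
      ∃ a, a ∈ 𝒜 0 ∧ ∃ c : A → ℕ, w = a * ∏ x ∈ s, x ^ c x := by
    intro w hw
    induction hw using Submonoid.closure_induction with
    | mem y hy =>
      rcases hy with hy | hy
      · exact ⟨y, hy, 0, by simp⟩
      · refine ⟨1, SetLike.one_mem_graded 𝒜, fun z => if z = y then 1 else 0, ?_⟩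
        rw [one_mul]
        rw [Finset.prod_eq_single_of_mem y hy (fun b _ hb => by simp [hb])]
        simp
    | one => exact ⟨1, SetLike.one_mem_graded 𝒜, 0, by simp⟩
    | mul w1 w2 _ _ h1 h2 =>
      obtain ⟨a1, ha1, c1, rfl⟩ := h1
      obtain ⟨a2, ha2, c2, rfl⟩ := h2
      refine ⟨a1 * a2, by simpa using SetLike.mul_mem_graded ha1 ha2, c1 + c2, ?_⟩
      have hppp : ∏ x ∈ s, x ^ (c1 + c2) x = (∏ x ∈ s, x ^ c1 x) * ∏ x ∈ s, x ^ c2 x := by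
        rw [← Finset.prod_mul_distrib]
        exact Finset.prod_congr rfl fun x _ => by simp [pow_add]
      rw [hppp]
      ring
  have hom : ∀ w ∈ Submonoid.closure ((𝒜 0 : Set A) ∪ (s : Set A)), ∃ j, w ∈ 𝒜 j := by
    intro w hw
    obtain ⟨a, ha, c, rfl⟩ := DECOMP w hw
    exact ⟨0 + ∑ x ∈ s, c x * d x,
      SetLike.mul_mem_graded ha (hprodmem s (le_refl _) c)⟩
  -- final argument
  intro p x hx
  have hx' : x ∈ 𝒜 (p * m) := hx
  set M : Submodule k A := Submodule.span k
    {w : A | w ∈ Submonoid.closure ((𝒜 0 : Set A) ∪ (s : Set A)) ∧ w ∈ 𝒜 (p * m)} with hMdef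
  have hxspan : x ∈ Submodule.span k
      ((Submonoid.closure ((𝒜 0 : Set A) ∪ (s : Set A)) : Submonoid A) : Set A) := by
    have h1 : x ∈ Subalgebra.toSubmodule (Algebra.adjoin k ((𝒜 0 : Set A) ∪ (s : Set A))) := by
      rw [hgen]; trivial
    rwa [Algebra.adjoin_eq_span] at h1
  have key : ∀ y ∈ Submodule.span k
      ((Submonoid.closure ((𝒜 0 : Set A) ∪ (s : Set A)) : Submonoid A) : Set A),
      ((DirectSum.decompose 𝒜 y) (p * m) : A) ∈ M := by
    intro y hy
    induction hy using Submodule.span_induction with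
    | mem w hw =>
      obtain ⟨j, hwj⟩ := hom w hw
      by_cases hj : j = p * m
      · subst hj
        rw [DirectSum.decompose_of_mem_same 𝒜 hwj]
        exact Submodule.subset_span ⟨hw, hwj⟩
      · rw [DirectSum.decompose_of_mem_ne 𝒜 hwj hj]
        exact zero_mem M
    | zero => simp
    | add a b _ _ h1 h2 =>
      rw [DirectSum.decompose_add]
      simpa using add_mem h1 h2
    | smul r a _ h =>
      rw [DirectSum.decompose_smul]
      simpa [DirectSum.smul_apply] using M.smul_mem r h
  have hxM : x ∈ M := by
    have h1 := key x hxspan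
    rwa [DirectSum.decompose_of_mem_same 𝒜 hx'] at h1
  have hMT : M ≤ Subalgebra.toSubmodule T := by
    rw [hMdef, Submodule.span_le]
    rintro w ⟨hwc, hwpm⟩
    rw [SetLike.mem_coe, Subalgebra.mem_toSubmodule]
    obtain ⟨a, ha, c, rfl⟩ := DECOMP w hwc
    by_cases hw0 : a * ∏ x ∈ s, x ^ c x = 0
    · rw [hw0]; exact zero_mem _
    · have hmem : a * ∏ x ∈ s, x ^ c x ∈ 𝒜 (0 + ∑ x ∈ s, c x * d x) :=
        SetLike.mul_mem_graded ha (hprodmem s (le_refl _) c)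
      have hdeg : 0 + ∑ x ∈ s, c x * d x = p * m :=
        DirectSum.degree_eq_of_mem_mem 𝒜 hmem hwpm hw0
      rw [zero_add] at hdeg
      exact mul_mem (h0T ha) (MAIN p c hdeg)
  exact hMT hxM
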